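/- (Directional fractional derivatives.) Let N ≥ 1. There exists a constant A > 0 depending only on N such that for every 0 < s < 1, every r > 0, every x₀ ∈ ℝ^N, every u ∈ C¹(closure of B_r(x₀)) and every unit vector ω ∈ 𝕊^{N−1}, one has ∫_{B_r(x₀)} ( ∫_{r_ω(x)}^{R_ω(x)} |u(x)−u(x+ρω)|²/|ρ|^{1+2s} dρ ) dx ≤ A·[u]²_{W^{s,2}(B_r(x₀))}, where R_ω(x) = sup{ ρ ∈ ℝ : x+ρω ∈ B_r(x₀) } and r_ω(x) = inf{ ρ ∈ ℝ : x+ρω ∈ B_r(x₀) }. -/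

import Mathlib

open MeasureTheory Metric
open scoped ENNReal

noncomputable section

/-- Euclidean space `ℝ^N`. -/
abbrev Spc (N : ℕ) := EuclideanSpace ℝ (Fin N)

/-- Squared Gagliardo `W^{s,2}` seminorm on a set `E ⊆ ℝ^N`. -/
noncomputable def gagliardoSqOn (N : ℕ) (s : ℝ) (E : Set (Spc N)) (u : Spc N → ℝ) : ℝ≥0∞ :=
  ∫⁻ x in E, ∫⁻ y in E, ENNReal.ofReal (|u x - u y| ^ 2 / ‖x - y‖ ^ ((N : ℝ) + 2 * s))

/-- `R_ω(x) = sup { ρ : x + ρ ω ∈ B_r(x₀) }`. -/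
noncomputable def Rdir (N : ℕ) (x₀ : Spc N) (r : ℝ) (ω : Spc N) (x : Spc N) : ℝ :=
  sSup { ρ : ℝ | x + ρ • ω ∈ ball x₀ r }

/-- `r_ω(x) = inf { ρ : x + ρ ω ∈ B_r(x₀) }`. -/
noncomputable def rdir (N : ℕ) (x₀ : Spc N) (r : ℝ) (ω : Spc N) (x : Spc N) : ℝ :=
  sInf { ρ : ℝ | x + ρ • ω ∈ ball x₀ r }

namespace DFD

variable {N : ℕ}

/-- Center of the averaging ball. -/
def ctr (x₀ : Spc N) (r : ℝ) (ω : Spc N) (x : Spc N) (ρ : ℝ) : Spc N :=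
  (x + (ρ/2) • ω) + (|ρ|/(16*r)) • (x₀ - (x + (ρ/2) • ω))

/-- Averaging ball. -/
def Dball (x₀ : Spc N) (r : ℝ) (ω : Spc N) (x : Spc N) (ρ : ℝ) : Set (Spc N) :=
  ball (ctr x₀ r ω x ρ) (|ρ|/16)

variable {x₀ : Spc N} {r : ℝ} {ω : Spc N}

lemma abs_le_two_mul_r {x : Spc N} {ρ : ℝ} (hω : ‖ω‖ = 1)
    (hx : x ∈ ball x₀ r) (hx' : x + ρ • ω ∈ ball x₀ r) : |ρ| ≤ 2 * r := by
  have h1 : ‖(x + ρ • ω) - x₀‖ < r := by simpa [mem_ball, dist_eq_norm] using hx'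
  have h2 : ‖x - x₀‖ < r := by simpa [mem_ball, dist_eq_norm] using hx
  have h3 : ρ • ω = ((x + ρ • ω) - x₀) - (x - x₀) := by abel
  have h4 : |ρ| = ‖ρ • ω‖ := by rw [norm_smul, hω, Real.norm_eq_abs, mul_one]
  rw [h4, h3]
  calc ‖((x + ρ • ω) - x₀) - (x - x₀)‖ ≤ ‖(x + ρ • ω) - x₀‖ + ‖x - x₀‖ := norm_sub_le _ _
    _ ≤ 2 * r := by linarith

lemma dist_bounds_of_mem_Dball (hr : 0 < r) (hω : ‖ω‖ = 1) {x y : Spc N} {ρ : ℝ}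
    (hx : x ∈ ball x₀ r) (hρ : |ρ| ≤ 2*r) (hy : y ∈ Dball x₀ r ω x ρ) :
    |ρ| * (5/16) ≤ ‖x - y‖ ∧ ‖x - y‖ ≤ |ρ| * (11/16) := by
  set m : Spc N := x + (ρ/2) • ω with hm
  set t : ℝ := |ρ|/(16*r) with htdef
  have ht0 : 0 ≤ t := by positivity
  have hxm : ‖x - m‖ = |ρ|/2 := by
    have : x - m = -((ρ/2) • ω) := by rw [hm]; abel
    rw [this, norm_neg, norm_smul, hω, Real.norm_eq_abs, mul_one, abs_div]
    norm_num
  have hxx₀ : ‖x₀ - x‖ < r := by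
    rw [norm_sub_rev]; simpa [mem_ball, dist_eq_norm] using hx
  have hcm : ‖ctr x₀ r ω x ρ - m‖ ≤ t * (r + |ρ|/2) := by
    have h1 : ctr x₀ r ω x ρ - m = t • (x₀ - m) := by rw [ctr, hm]; abel
    rw [h1, norm_smul, Real.norm_eq_abs, abs_of_nonneg ht0]
    have h2 : ‖x₀ - m‖ ≤ ‖x₀ - x‖ + ‖x - m‖ := by
      have : x₀ - m = (x₀ - x) + (x - m) := by abel
      rw [this]; exact norm_add_le _ _
    have h3 : ‖x₀ - m‖ ≤ r + |ρ|/2 := by rw [hxm] at h2; linarith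
    exact mul_le_mul_of_nonneg_left h3 ht0
  have habs : 0 ≤ |ρ| := abs_nonneg ρ
  have ht3 : t * (r + |ρ|/2) ≤ |ρ|/16 + |ρ|/16 := by
    rw [htdef, div_mul_eq_mul_div, div_le_iff₀ (by positivity)]
    nlinarith
  have hyc : ‖y - ctr x₀ r ω x ρ‖ < |ρ|/16 := by
    simpa [Dball, mem_ball, dist_eq_norm] using hy
  have hym : ‖y - m‖ ≤ 3 * |ρ| / 16 := by
    have : y - m = (y - ctr x₀ r ω x ρ) + (ctr x₀ r ω x ρ - m) := by abel
    calc ‖y - m‖ ≤ ‖y - ctr x₀ r ω x ρ‖ + ‖ctr x₀ r ω x ρ - m‖ := by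
          rw [this]; exact norm_add_le _ _
      _ ≤ 3 * |ρ| / 16 := by linarith
  constructor
  · have h1 : ‖x - m‖ ≤ ‖x - y‖ + ‖y - m‖ := by
      have : x - m = (x - y) + (y - m) := by abel
      rw [this]; exact norm_add_le _ _
    rw [hxm] at h1; linarith
  · have h1 : ‖x - y‖ ≤ ‖x - m‖ + ‖y - m‖ := by
      have : x - y = (x - m) - (y - m) := by abel
      rw [this]; exact norm_sub_le _ _
    rw [hxm] at h1; linarith

lemma Dball_subset (hr : 0 < r) (hω : ‖ω‖ = 1) {x : Spc N} {ρ : ℝ}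
    (hx : x ∈ ball x₀ r) (hx' : x + ρ • ω ∈ ball x₀ r) :
    Dball x₀ r ω x ρ ⊆ ball x₀ r := by
  set m : Spc N := x + (ρ/2) • ω with hm
  set t : ℝ := |ρ|/(16*r) with htdef
  have habs : 0 ≤ |ρ| := abs_nonneg ρ
  have hρ : |ρ| ≤ 2 * r := abs_le_two_mul_r hω hx hx'
  have ht0 : 0 ≤ t := by positivity
  have ht1 : t ≤ 1 := by
    rw [htdef, div_le_one (by positivity)]; linarith
  have h1 : ‖x - x₀‖ < r := by simpa [mem_ball, dist_eq_norm] using hx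
  have h2 : ‖(x + ρ • ω) - x₀‖ < r := by simpa [mem_ball, dist_eq_norm] using hx'
  have hmx₀ : ‖m - x₀‖ < r := by
    have hid : m - x₀ = (1/2 : ℝ) • ((x - x₀) + ((x + ρ • ω) - x₀)) := by
      rw [hm]; module
    calc ‖m - x₀‖ = (1/2) * ‖(x - x₀) + ((x + ρ • ω) - x₀)‖ := by
          rw [hid, norm_smul, Real.norm_eq_abs]; norm_num
      _ ≤ (1/2) * (‖x - x₀‖ + ‖(x + ρ • ω) - x₀‖) := by
          have := norm_add_le (x - x₀) ((x + ρ • ω) - x₀); linarith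
      _ < r := by linarith
  intro y hy
  have hyc : ‖y - ctr x₀ r ω x ρ‖ < |ρ|/16 := by
    simpa [Dball, mem_ball, dist_eq_norm] using hy
  have hcx₀ : ‖ctr x₀ r ω x ρ - x₀‖ = (1-t) * ‖m - x₀‖ := by
    have h3 : ctr x₀ r ω x ρ - x₀ = (1-t) • (m - x₀) := by
      rw [ctr, ← hm, ← htdef]; module
    rw [h3, norm_smul, Real.norm_eq_abs, abs_of_nonneg (by linarith)]
  have htr : |ρ|/16 = t * r := by rw [htdef]; field_simp
  have h4 : (1-t) * ‖m - x₀‖ ≤ (1-t) * r := by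
    apply mul_le_mul_of_nonneg_left hmx₀.le (by linarith)
  have : ‖y - x₀‖ < r := by
    have h5 : ‖y - x₀‖ ≤ ‖y - ctr x₀ r ω x ρ‖ + ‖ctr x₀ r ω x ρ - x₀‖ := by
      rw [show y - x₀ = (y - ctr x₀ r ω x ρ) + (ctr x₀ r ω x ρ - x₀) by abel]
      exact norm_add_le _ _
    nlinarith
  simpa [mem_ball, dist_eq_norm] using this


lemma Ioo_subset {x : Spc N} (hx : x ∈ ball x₀ r) :
    Set.Ioo (sInf {ρ : ℝ | x + ρ • ω ∈ ball x₀ r}) (sSup {ρ : ℝ | x + ρ • ω ∈ ball x₀ r})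
      ⊆ {ρ : ℝ | x + ρ • ω ∈ ball x₀ r} := by
  set S : Set ℝ := {ρ : ℝ | x + ρ • ω ∈ ball x₀ r} with hS
  have h0 : (0:ℝ) ∈ S := by simp only [hS, Set.mem_setOf_eq, zero_smul, add_zero]; exact hx
  have hne : S.Nonempty := ⟨0, h0⟩
  have hconv : Convex ℝ S := by
    intro ρ₁ h₁ ρ₂ h₂ a b ha hb hab
    have hid : x + (a • ρ₁ + b • ρ₂) • ω = a • (x + ρ₁ • ω) + b • (x + ρ₂ • ω) := by
      simp only [smul_eq_mul]
      rw [show a • (x + ρ₁ • ω) + b • (x + ρ₂ • ω)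
          = (a + b) • x + (a * ρ₁ + b * ρ₂) • ω by module, hab, one_smul]
    show x + (a • ρ₁ + b • ρ₂) • ω ∈ ball x₀ r
    rw [hid]
    exact (convex_ball x₀ r) h₁ h₂ ha hb hab
  intro t ht
  obtain ⟨p, hp, hpt⟩ := exists_lt_of_csInf_lt hne ht.1
  obtain ⟨q, hq, htq⟩ := exists_lt_of_lt_csSup hne ht.2
  exact hconv.ordConnected.out hp hq ⟨hpt.le, htq.le⟩
noncomputable def Kf (v : Spc N → ℝ) (a b : Spc N) : ℝ≥0∞ := ENNReal.ofReal (|v a - v b|^2)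
noncomputable def wt (N : ℕ) (s : ℝ) (ρ : ℝ) : ℝ≥0∞ :=
  (ENNReal.ofReal (|ρ| ^ ((N:ℝ) + 1 + 2*s)))⁻¹
noncomputable def Phi1 (x₀ : Spc N) (r : ℝ) (ω : Spc N) (s : ℝ) (v : Spc N → ℝ)
    (x : Spc N) (ρ : ℝ) : ℝ≥0∞ :=
  (ball x₀ r).indicator 1 x * (ball x₀ r).indicator 1 (x + ρ • ω) * wt N s ρ *
    ∫⁻ y in Dball x₀ r ω x ρ ∩ ball x₀ r, Kf v x y
noncomputable def Phi2 (x₀ : Spc N) (r : ℝ) (ω : Spc N) (s : ℝ) (v : Spc N → ℝ)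
    (x : Spc N) (ρ : ℝ) : ℝ≥0∞ :=
  (ball x₀ r).indicator 1 x * (ball x₀ r).indicator 1 (x + ρ • ω) * wt N s ρ *
    ∫⁻ y in Dball x₀ r ω x ρ ∩ ball x₀ r, Kf v (x + ρ • ω) y

lemma continuous_ctr : Continuous fun p : Spc N × ℝ => ctr x₀ r ω p.1 p.2 := by
  unfold ctr; fun_prop

lemma measurable_wt {s : ℝ} (hs : 0 ≤ s) : Measurable (wt N s) := by
  unfold wt
  have h : Continuous fun ρ : ℝ => |ρ| ^ ((N:ℝ) + 1 + 2*s) :=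
    (Real.continuous_rpow_const (by positivity)).comp continuous_abs
  exact (h.measurable.ennreal_ofReal).inv

lemma measurableSet_pairD :
    MeasurableSet {q : (Spc N × ℝ) × Spc N | q.2 ∈ Dball x₀ r ω q.1.1 q.1.2} := by
  have : IsOpen {q : (Spc N × ℝ) × Spc N | dist q.2 (ctr x₀ r ω q.1.1 q.1.2) < |q.1.2|/16} := by
    apply isOpen_lt
    · exact continuous_dist.comp ((continuous_snd).prodMk
        (continuous_ctr.comp continuous_fst))
    · fun_prop
  exact this.measurableSet

lemma measurable_KfA {v : Spc N → ℝ} (hv : Measurable v) :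
    Measurable fun q : (Spc N × ℝ) × Spc N => Kf v q.1.1 q.2 := by
  unfold Kf
  exact (((hv.comp (measurable_fst.comp measurable_fst)).sub
    (hv.comp measurable_snd)).abs.pow_const 2).ennreal_ofReal

lemma measurable_KfB {v : Spc N → ℝ} (hv : Measurable v) (hω : Continuous fun p : Spc N × ℝ => p.1 + p.2 • ω) :
    Measurable fun q : (Spc N × ℝ) × Spc N => Kf v (q.1.1 + q.1.2 • ω) q.2 := by
  unfold Kf
  exact (((hv.comp ((hω.measurable).comp measurable_fst)).sub
    (hv.comp measurable_snd)).abs.pow_const 2).ennreal_ofReal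

lemma measurable_inner_aux {v : Spc N → ℝ}
    (K : (Spc N × ℝ) × Spc N → ℝ≥0∞) (hK : Measurable K) :
    Measurable fun p : Spc N × ℝ => ∫⁻ y in Dball x₀ r ω p.1 p.2 ∩ ball x₀ r, K (p, y) := by
  have hset : MeasurableSet ({q : (Spc N × ℝ) × Spc N | q.2 ∈ Dball x₀ r ω q.1.1 q.1.2} ∩
      {q : (Spc N × ℝ) × Spc N | q.2 ∈ ball x₀ r}) :=
    measurableSet_pairD.inter (measurableSet_ball.preimage measurable_snd)
  have hF := Measurable.lintegral_prod_right' (ν := volume) (hK.indicator hset)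
  have heq : (fun p : Spc N × ℝ => ∫⁻ y in Dball x₀ r ω p.1 p.2 ∩ ball x₀ r, K (p, y))
      = fun p : Spc N × ℝ => ∫⁻ y,
        ({q : (Spc N × ℝ) × Spc N | q.2 ∈ Dball x₀ r ω q.1.1 q.1.2} ∩
          {q : (Spc N × ℝ) × Spc N | q.2 ∈ ball x₀ r}).indicator K (p, y) := by
    funext p
    have h1 : MeasurableSet (Dball x₀ r ω p.1 p.2 ∩ ball x₀ r) :=
      measurableSet_ball.inter measurableSet_ball
    rw [← lintegral_indicator h1 (fun y => K (p, y))]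
    refine lintegral_congr fun y => ?_
    by_cases h : y ∈ Dball x₀ r ω p.1 p.2 ∩ ball x₀ r
    · rw [Set.indicator_of_mem h, Set.indicator_of_mem (by exact h)]
    · rw [Set.indicator_of_notMem h, Set.indicator_of_notMem (by exact h)]
  rw [heq]; exact hF

lemma measurable_phi1 {s : ℝ} (hs : 0 ≤ s) {v : Spc N → ℝ} (hv : Measurable v) :
    Measurable (Function.uncurry (Phi1 x₀ r ω s v)) := by
  have h1 : Measurable fun p : Spc N × ℝ => (ball x₀ r).indicator (1 : Spc N → ℝ≥0∞) p.1 :=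
    (measurable_const.indicator measurableSet_ball).comp measurable_fst
  have hc : Continuous fun p : Spc N × ℝ => p.1 + p.2 • ω := by fun_prop
  have h2 : Measurable fun p : Spc N × ℝ => (ball x₀ r).indicator (1 : Spc N → ℝ≥0∞) (p.1 + p.2 • ω) :=
    (measurable_const.indicator measurableSet_ball).comp hc.measurable
  have h3 : Measurable fun p : Spc N × ℝ => wt N s p.2 := (measurable_wt hs).comp measurable_snd
  have h4 := measurable_inner_aux (x₀ := x₀) (r := r) (ω := ω) (v := v) _ (measurable_KfA hv)
  exact (((h1.mul h2).mul h3).mul h4 : Measurable _)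

lemma measurable_phi2 {s : ℝ} (hs : 0 ≤ s) {v : Spc N → ℝ} (hv : Measurable v) :
    Measurable (Function.uncurry (Phi2 x₀ r ω s v)) := by
  have h1 : Measurable fun p : Spc N × ℝ => (ball x₀ r).indicator (1 : Spc N → ℝ≥0∞) p.1 :=
    (measurable_const.indicator measurableSet_ball).comp measurable_fst
  have hc : Continuous fun p : Spc N × ℝ => p.1 + p.2 • ω := by fun_prop
  have h2 : Measurable fun p : Spc N × ℝ => (ball x₀ r).indicator (1 : Spc N → ℝ≥0∞) (p.1 + p.2 • ω) :=
    (measurable_const.indicator measurableSet_ball).comp hc.measurable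
  have h3 : Measurable fun p : Spc N × ℝ => wt N s p.2 := (measurable_wt hs).comp measurable_snd
  have h4 := measurable_inner_aux (x₀ := x₀) (r := r) (ω := ω) (v := v) _ (measurable_KfB hv hc)
  exact (((h1.mul h2).mul h3).mul h4 : Measurable _)


lemma stepA {s : ℝ} (hs0 : 0 < s) (hr : 0 < r) (hω : ‖ω‖ = 1) (hN : 1 ≤ N)
    {v : Spc N → ℝ} (hv : Measurable v) {x : Spc N} {ρ : ℝ}
    (hx : x ∈ ball x₀ r) (hx' : x + ρ • ω ∈ ball x₀ r) :
    ENNReal.ofReal (|v x - v (x + ρ • ω)|^2 / |ρ| ^ (1 + 2*s)) ≤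
      (ENNReal.ofReal (2 * 16^N) * (volume (ball (0:Spc N) 1))⁻¹) *
        (Phi1 x₀ r ω s v x ρ + Phi2 x₀ r ω s v x ρ) := by
  by_cases hρ0 : ρ = 0
  · subst hρ0
    simp only [zero_smul, add_zero, sub_self, abs_zero]
    rw [show (0:ℝ)^2 = 0 by ring, zero_div, ENNReal.ofReal_zero]
    exact zero_le
  haveI : Nontrivial (Spc N) := Module.nontrivial_of_finrank_pos
    (by rw [finrank_euclideanSpace_fin]; exact hN)
  have hρpos : 0 < |ρ| := abs_pos.2 hρ0
  have hDsub : Dball x₀ r ω x ρ ⊆ ball x₀ r := Dball_subset hr hω hx hx'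
  have hinter : Dball x₀ r ω x ρ ∩ ball x₀ r = Dball x₀ r ω x ρ :=
    Set.inter_eq_self_of_subset_left hDsub
  have hvolD : volume (Dball x₀ r ω x ρ)
      = ENNReal.ofReal ((|ρ|/16)^N) * volume (ball (0:Spc N) 1) := by
    rw [Dball, Measure.addHaar_ball volume _ (by positivity), finrank_euclideanSpace_fin]
  -- notation
  set V : ℝ≥0∞ := volume (ball (0:Spc N) 1) with hV
  have hV0 : V ≠ 0 := (measure_ball_pos volume _ one_pos).ne'
  have hVt : V ≠ ⊤ := measure_ball_lt_top.ne
  set P : ℝ≥0∞ := ENNReal.ofReal ((|ρ|/16)^N) with hP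
  set W : ℝ≥0∞ := ENNReal.ofReal (|ρ| ^ (1 + 2*s)) with hW
  set E : ℝ≥0∞ := ENNReal.ofReal (|ρ| ^ ((N:ℝ) + 1 + 2*s)) with hE
  set S16 : ℝ≥0∞ := ENNReal.ofReal ((16:ℝ)^N) with hS16
  have hP0 : P ≠ 0 := by
    rw [hP]; simp only [ne_eq, ENNReal.ofReal_eq_zero, not_le]; positivity
  have hPt : P ≠ ⊤ := ENNReal.ofReal_ne_top
  have hW0 : W ≠ 0 := by
    rw [hW]; simp only [ne_eq, ENNReal.ofReal_eq_zero, not_le]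
    exact Real.rpow_pos_of_pos hρpos _
  have hWt : W ≠ ⊤ := ENNReal.ofReal_ne_top
  have hE0 : E ≠ 0 := by
    rw [hE]; simp only [ne_eq, ENNReal.ofReal_eq_zero, not_le]
    exact Real.rpow_pos_of_pos hρpos _
  have hEt : E ≠ ⊤ := ENNReal.ofReal_ne_top
  have hS0 : S16 ≠ 0 := by
    rw [hS16]; simp only [ne_eq, ENNReal.ofReal_eq_zero, not_le]; positivity
  have hSt : S16 ≠ ⊤ := ENNReal.ofReal_ne_top
  -- the real-number weight identity
  have hPWE : P * W = E * S16⁻¹ := by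
    rw [hP, hW, hE, hS16, ← ENNReal.ofReal_mul (by positivity),
      ← ENNReal.ofReal_inv_of_pos (by positivity), ← ENNReal.ofReal_mul (by positivity)]
    congr 1
    have h1 : |ρ| ^ ((N:ℝ) + 1 + 2*s) = |ρ| ^ (N:ℝ) * |ρ| ^ (1 + 2*s) := by
      rw [← Real.rpow_add hρpos]; ring_nf
    rw [h1, Real.rpow_natCast, div_pow]
    field_simp
  -- averaging inequality
  set I : ℝ≥0∞ := ∫⁻ y in Dball x₀ r ω x ρ, (Kf v x y + Kf v (x + ρ • ω) y) with hI
  have hmeasK1 : Measurable fun y => Kf v x y := by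
    unfold Kf
    exact ((measurable_const.sub hv).abs.pow_const 2).ennreal_ofReal
  have hmeasK2 : Measurable fun y => Kf v (x + ρ • ω) y := by
    unfold Kf
    exact ((measurable_const.sub hv).abs.pow_const 2).ennreal_ofReal
  have hkey : ENNReal.ofReal (|v x - v (x + ρ • ω)|^2) * (P * V) ≤ 2 * I := by
    rw [← hvolD, ← setLIntegral_const (Dball x₀ r ω x ρ)]
    have hmono : ∀ y ∈ Dball x₀ r ω x ρ,
        ENNReal.ofReal (|v x - v (x + ρ • ω)|^2) ≤ 2 * (Kf v x y + Kf v (x + ρ • ω) y) := by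
      intro y _
      unfold Kf
      rw [← ENNReal.ofReal_add (by positivity) (by positivity),
        show (2:ℝ≥0∞) * ENNReal.ofReal (|v x - v y| ^ 2 + |v (x + ρ • ω) - v y| ^ 2)
          = ENNReal.ofReal (2 * (|v x - v y| ^ 2 + |v (x + ρ • ω) - v y| ^ 2)) by
          rw [ENNReal.ofReal_mul (by norm_num)]; simp]
      apply ENNReal.ofReal_le_ofReal
      have e1 : |v x - v (x + ρ • ω)|^2 = (v x - v (x + ρ • ω))^2 := sq_abs _
      have e2 : |v x - v y|^2 = (v x - v y)^2 := sq_abs _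
      have e3 : |v (x + ρ • ω) - v y|^2 = (v (x + ρ • ω) - v y)^2 := sq_abs _
      rw [e1, e2, e3]
      nlinarith [sq_nonneg ((v x - v y) + (v (x + ρ • ω) - v y))]
    calc (∫⁻ _ in Dball x₀ r ω x ρ, ENNReal.ofReal (|v x - v (x + ρ • ω)|^2))
        ≤ ∫⁻ y in Dball x₀ r ω x ρ, 2 * (Kf v x y + Kf v (x + ρ • ω) y) :=
          setLIntegral_mono ((hmeasK1.add hmeasK2).const_mul 2) hmono
      _ = 2 * I := lintegral_const_mul' 2 _ (by norm_num)
  -- reduce the RHS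
  have hRHS : (ENNReal.ofReal (2 * 16^N) * V⁻¹) *
      (Phi1 x₀ r ω s v x ρ + Phi2 x₀ r ω s v x ρ) = 2 * S16 * V⁻¹ * (E⁻¹ * I) := by
    unfold Phi1 Phi2
    rw [Set.indicator_of_mem hx, Set.indicator_of_mem hx', hinter]
    simp only [Pi.one_apply, one_mul]
    rw [hI, lintegral_add_left hmeasK1]
    unfold wt
    rw [show ENNReal.ofReal (2 * 16^N) = 2 * S16 by
      rw [hS16, ENNReal.ofReal_mul (by norm_num)]; simp]
    rw [← hE]
    ring
  rw [hRHS]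
  -- left-hand side
  have hLHS : ENNReal.ofReal (|v x - v (x + ρ • ω)|^2 / |ρ| ^ (1 + 2*s))
      = ENNReal.ofReal (|v x - v (x + ρ • ω)|^2) * W⁻¹ := by
    rw [ENNReal.ofReal_div_of_pos (Real.rpow_pos_of_pos hρpos _), div_eq_mul_inv, hW]
  rw [hLHS]
  -- cancellation
  set a : ℝ≥0∞ := ENNReal.ofReal (|v x - v (x + ρ • ω)|^2) with ha
  have hPS : P * S16 = E * W⁻¹ := by
    have h1 : P * W * (S16 * W⁻¹) = E * S16⁻¹ * (S16 * W⁻¹) := by rw [hPWE]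
    calc P * S16 = P * W * (S16 * W⁻¹) := by
          rw [show P * W * (S16 * W⁻¹) = P * S16 * (W * W⁻¹) by ring,
            ENNReal.mul_inv_cancel hW0 hWt, mul_one]
      _ = E * S16⁻¹ * (S16 * W⁻¹) := h1
      _ = E * W⁻¹ * (S16⁻¹ * S16) := by ring
      _ = E * W⁻¹ := by rw [ENNReal.inv_mul_cancel hS0 hSt, mul_one]
  have h2 : (P * V) * (S16 * E⁻¹ * V⁻¹) = W⁻¹ := by
    calc (P * V) * (S16 * E⁻¹ * V⁻¹) = (P * S16) * E⁻¹ * (V * V⁻¹) := by ring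
      _ = (P * S16) * E⁻¹ := by rw [ENNReal.mul_inv_cancel hV0 hVt, mul_one]
      _ = E * W⁻¹ * E⁻¹ := by rw [hPS]
      _ = W⁻¹ * (E * E⁻¹) := by ring
      _ = W⁻¹ := by rw [ENNReal.mul_inv_cancel hE0 hEt, mul_one]
  calc a * W⁻¹ = (a * (P * V)) * (S16 * E⁻¹ * V⁻¹) :=
        ((by rw [mul_assoc, h2]) : (a * (P * V)) * (S16 * E⁻¹ * V⁻¹) = a * W⁻¹).symm
    _ ≤ 2 * I * (S16 * E⁻¹ * V⁻¹) := mul_le_mul_left hkey _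
    _ = 2 * S16 * V⁻¹ * (E⁻¹ * I) := by ring

lemma rho_integral_le {s : ℝ} (hs0 : 0 < s) (hr : 0 < r) (hω : ‖ω‖ = 1)
    {x y : Spc N} (hx : x ∈ ball x₀ r) :
    (∫⁻ ρ : ℝ, (Set.Icc (-(2*r)) (2*r)).indicator 1 ρ *
        (Dball x₀ r ω x ρ).indicator 1 y * wt N s ρ)
      ≤ ENNReal.ofReal (4 / ‖x - y‖ ^ ((N:ℝ) + 2*s)) := by
  set d : ℝ := ‖x - y‖ with hd
  have hd0 : 0 ≤ d := norm_nonneg _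
  by_cases hdz : d = 0
  · -- the integrand vanishes identically
    have hzero : ∀ ρ : ℝ, (Set.Icc (-(2*r)) (2*r)).indicator 1 ρ *
        (Dball x₀ r ω x ρ).indicator 1 y * wt N s ρ = 0 := by
      intro ρ
      by_cases hρI : ρ ∈ Set.Icc (-(2*r)) (2*r)
      · by_cases hyD : y ∈ Dball x₀ r ω x ρ
        · exfalso
          have hρ2 : |ρ| ≤ 2*r := abs_le.mpr ⟨hρI.1, hρI.2⟩
          have hb := (dist_bounds_of_mem_Dball hr hω hx hρ2 hyD).1
          rw [← hd, hdz] at hb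
          have hρ0 : ρ = 0 := by
            have : |ρ| ≤ 0 := by nlinarith [abs_nonneg ρ]
            simpa [abs_nonpos_iff] using this
          rw [hρ0] at hyD
          simp only [Dball, abs_zero, zero_div] at hyD
          exact absurd hyD (by simp)
        · rw [Set.indicator_of_notMem hyD]; ring
      · rw [Set.indicator_of_notMem hρI]; ring
    calc (∫⁻ ρ : ℝ, (Set.Icc (-(2*r)) (2*r)).indicator 1 ρ *
          (Dball x₀ r ω x ρ).indicator 1 y * wt N s ρ)
        = ∫⁻ _ : ℝ, 0 := lintegral_congr hzero
      _ = 0 := lintegral_zero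
      _ ≤ _ := zero_le
  · have hdpos : 0 < d := lt_of_le_of_ne hd0 (Ne.symm hdz)
    set e : ℝ := (N:ℝ) + 1 + 2*s with he
    have hepos : 0 < e := by positivity
    set bset : Set ℝ := Set.Icc ((16/11)*d) ((16/5)*d) ∪ Set.Icc (-((16/5)*d)) (-((16/11)*d))
      with hbset
    have hbmeas : MeasurableSet bset := (measurableSet_Icc).union measurableSet_Icc
    have hpt : ∀ ρ : ℝ, (Set.Icc (-(2*r)) (2*r)).indicator 1 ρ *
        (Dball x₀ r ω x ρ).indicator 1 y * wt N s ρ ≤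
        bset.indicator (fun _ => (ENNReal.ofReal (d ^ e))⁻¹) ρ := by
      intro ρ
      by_cases hρI : ρ ∈ Set.Icc (-(2*r)) (2*r)
      · by_cases hyD : y ∈ Dball x₀ r ω x ρ
        · have hρ2 : |ρ| ≤ 2*r := abs_le.mpr ⟨hρI.1, hρI.2⟩
          obtain ⟨hb1, hb2⟩ := dist_bounds_of_mem_Dball hr hω hx hρ2 hyD
          rw [← hd] at hb1 hb2
          have hlow : (16/11)*d ≤ |ρ| := by linarith
          have hhigh : |ρ| ≤ (16/5)*d := by linarith
          have hmem : ρ ∈ bset := by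
            rcases abs_cases ρ with ⟨habs, hsign⟩ | ⟨habs, hsign⟩
            · left; constructor <;> [linarith [hlow, habs]; linarith [hhigh, habs]]
            · right; constructor <;> [linarith [hhigh, habs]; linarith [hlow, habs]]
          rw [Set.indicator_of_mem hρI, Set.indicator_of_mem hyD, Set.indicator_of_mem hmem]
          simp only [Pi.one_apply, one_mul]
          unfold wt
          rw [← he, ENNReal.inv_le_inv]
          apply ENNReal.ofReal_le_ofReal
          apply Real.rpow_le_rpow hd0 (by linarith) hepos.le
        · rw [Set.indicator_of_notMem hyD]
          simp only [mul_zero, zero_mul]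
          exact zero_le
      · rw [Set.indicator_of_notMem hρI]
        simp only [zero_mul]
        exact zero_le
    calc (∫⁻ ρ : ℝ, (Set.Icc (-(2*r)) (2*r)).indicator 1 ρ *
          (Dball x₀ r ω x ρ).indicator 1 y * wt N s ρ)
        ≤ ∫⁻ ρ : ℝ, bset.indicator (fun _ => (ENNReal.ofReal (d ^ e))⁻¹) ρ := lintegral_mono hpt
      _ = (ENNReal.ofReal (d ^ e))⁻¹ * volume bset := lintegral_indicator_const hbmeas _
      _ ≤ (ENNReal.ofReal (d ^ e))⁻¹ * ENNReal.ofReal (4 * d) := by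
          apply mul_le_mul_right
          calc volume bset ≤ volume (Set.Icc ((16/11)*d) ((16/5)*d))
                + volume (Set.Icc (-((16/5)*d)) (-((16/11)*d))) := measure_union_le _ _
            _ = ENNReal.ofReal ((16/5)*d - (16/11)*d)
                + ENNReal.ofReal (-((16/11)*d) - -((16/5)*d)) := by rw [Real.volume_Icc, Real.volume_Icc]
            _ ≤ ENNReal.ofReal (4 * d) := by
                rw [← ENNReal.ofReal_add (by nlinarith) (by nlinarith)]
                apply ENNReal.ofReal_le_ofReal
                nlinarith
      _ = ENNReal.ofReal (4 / d ^ ((N:ℝ) + 2*s)) := by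
          rw [← ENNReal.ofReal_inv_of_pos (Real.rpow_pos_of_pos hdpos _),
            ← ENNReal.ofReal_mul (by positivity)]
          congr 1
          have hsplit : d ^ e = d ^ ((N:ℝ) + 2*s) * d := by
            rw [he, show (N:ℝ) + 1 + 2*s = ((N:ℝ) + 2*s) + 1 by ring,
              Real.rpow_add hdpos, Real.rpow_one]
          rw [hsplit]
          have h1 : d ^ ((N:ℝ) + 2*s) ≠ 0 := (Real.rpow_pos_of_pos hdpos _).ne'
          field_simp

lemma phi_flip {s : ℝ} {v : Spc N → ℝ} (x : Spc N) (ρ : ℝ) :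
    Phi1 x₀ r ω s v (x + ρ • ω) (-ρ) = Phi2 x₀ r ω s v x ρ := by
  have hc : ctr x₀ r ω (x + ρ • ω) (-ρ) = ctr x₀ r ω x ρ := by
    unfold ctr; rw [abs_neg]; module
  have hD : Dball x₀ r ω (x + ρ • ω) (-ρ) = Dball x₀ r ω x ρ := by
    unfold Dball; rw [hc, abs_neg]
  have hpt : (x + ρ • ω) + (-ρ) • ω = x := by module
  unfold Phi1 Phi2 wt
  rw [hD, hpt, abs_neg]
  ring

set_option maxHeartbeats 1000000 in
lemma phi2_integral_eq {s : ℝ} (hs0 : 0 ≤ s) {v : Spc N → ℝ} (hv : Measurable v) :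
    (∫⁻ x : Spc N, ∫⁻ ρ : ℝ, Phi2 x₀ r ω s v x ρ)
      = ∫⁻ x : Spc N, ∫⁻ ρ : ℝ, Phi1 x₀ r ω s v x ρ := by
  have hm1 : Measurable (Function.uncurry (Phi1 x₀ r ω s v)) := measurable_phi1 hs0 hv
  have hm2 : Measurable (Function.uncurry (Phi2 x₀ r ω s v)) := measurable_phi2 hs0 hv
  rw [lintegral_lintegral_swap hm2.aemeasurable]
  have h1 : ∀ ρ : ℝ, (∫⁻ x : Spc N, Phi2 x₀ r ω s v x ρ)
      = ∫⁻ x : Spc N, Phi1 x₀ r ω s v x (-ρ) := by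
    intro ρ
    have hflip : ∀ x : Spc N, Phi2 x₀ r ω s v x ρ
        = (fun z => Phi1 x₀ r ω s v z (-ρ)) (x + ρ • ω) := fun x => (phi_flip x ρ).symm
    simp_rw [hflip]
    exact (measurePreserving_add_right volume (ρ • ω)).lintegral_comp
      (hm1.comp (measurable_id.prodMk measurable_const))
  simp_rw [h1]
  have hm1swap : Measurable fun q : ℝ × Spc N => Phi1 x₀ r ω s v q.2 q.1 := by
    have h := hm1.comp (measurable_swap (α := ℝ) (β := Spc N))
    exact h
  have hG : Measurable fun σ : ℝ => ∫⁻ x : Spc N, Phi1 x₀ r ω s v x σ :=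
    Measurable.lintegral_prod_right' (ν := volume) hm1swap
  have h2 : (∫⁻ ρ : ℝ, (fun σ : ℝ => ∫⁻ x : Spc N, Phi1 x₀ r ω s v x σ) (-ρ))
      = ∫⁻ σ : ℝ, ∫⁻ x : Spc N, Phi1 x₀ r ω s v x σ :=
    (Measure.measurePreserving_neg volume).lintegral_comp hG
  rw [show (∫⁻ ρ : ℝ, ∫⁻ x : Spc N, Phi1 x₀ r ω s v x (-ρ))
      = ∫⁻ σ : ℝ, ∫⁻ x : Spc N, Phi1 x₀ r ω s v x σ from h2]
  exact lintegral_lintegral_swap hm1swap.aemeasurable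


set_option maxHeartbeats 1000000 in
lemma phi1_integral_le {s : ℝ} (hs0 : 0 < s) (hr : 0 < r) (hω : ‖ω‖ = 1)
    {v : Spc N → ℝ} (hv : Measurable v) :
    (∫⁻ x : Spc N, ∫⁻ ρ : ℝ, Phi1 x₀ r ω s v x ρ)
      ≤ ENNReal.ofReal 4 *
        ∫⁻ x in ball x₀ r, ∫⁻ y in ball x₀ r,
          ENNReal.ofReal (|v x - v y|^2 / ‖x - y‖ ^ ((N:ℝ) + 2*s)) := by
  classical
  set B : Set (Spc N) := ball x₀ r with hB
  set g : Spc N → ℝ → Spc N → ℝ≥0∞ := fun x ρ y =>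
    (Set.Icc (-(2*r)) (2*r)).indicator 1 ρ * (Dball x₀ r ω x ρ).indicator 1 y *
      wt N s ρ * B.indicator (fun y' => Kf v x y') y with hg
  have hKmeas : ∀ x : Spc N, Measurable fun y => Kf v x y := by
    intro x; unfold Kf
    exact ((measurable_const.sub hv).abs.pow_const 2).ennreal_ofReal
  have hindK_ne_top : ∀ (x y : Spc N), B.indicator (fun y' => Kf v x y') y ≠ ⊤ := by
    intro x y
    by_cases hyB : y ∈ B
    · rw [Set.indicator_of_mem hyB]; exact ENNReal.ofReal_ne_top
    · rw [Set.indicator_of_notMem hyB]; exact ENNReal.zero_ne_top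
  -- Step 1 : pointwise bound for Phi1
  have step1 : ∀ (x : Spc N) (ρ : ℝ),
      Phi1 x₀ r ω s v x ρ ≤ B.indicator 1 x * ∫⁻ y : Spc N, g x ρ y := by
    intro x ρ
    by_cases hx : x ∈ B
    · by_cases hx' : x + ρ • ω ∈ B
      · have hρ2 : ρ ∈ Set.Icc (-(2*r)) (2*r) := by
          have := abs_le_two_mul_r hω hx hx'
          exact abs_le.mp this
        unfold Phi1
        rw [Set.indicator_of_mem hx, Set.indicator_of_mem hx']
        simp only [Pi.one_apply, one_mul]
        apply le_of_eq
        have hcongr : ∀ y : Spc N, g x ρ y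
            = wt N s ρ * (Dball x₀ r ω x ρ ∩ B).indicator (fun y' => Kf v x y') y := by
          intro y
          simp only [hg]
          by_cases hyD : y ∈ Dball x₀ r ω x ρ
          · by_cases hyB : y ∈ B
            · rw [Set.indicator_of_mem hρ2, Set.indicator_of_mem hyD,
                Set.indicator_of_mem hyB, Set.indicator_of_mem (Set.mem_inter hyD hyB)]
              simp only [Pi.one_apply]; ring
            · rw [Set.indicator_of_notMem hyB,
                Set.indicator_of_notMem (s := Dball x₀ r ω x ρ ∩ B)
                  (fun h => hyB h.2)]
              simp only [mul_zero]
          · rw [Set.indicator_of_notMem hyD,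
              Set.indicator_of_notMem (s := Dball x₀ r ω x ρ ∩ B)
                (fun h => hyD h.1)]
            simp only [mul_zero, zero_mul, mul_zero]
        have hDBmeas : MeasurableSet (Dball x₀ r ω x ρ ∩ B) :=
          measurableSet_ball.inter measurableSet_ball
        rw [lintegral_congr hcongr,
          lintegral_const_mul (wt N s ρ) ((hKmeas x).indicator hDBmeas),
          lintegral_indicator hDBmeas]
      · unfold Phi1
        rw [Set.indicator_of_notMem hx']
        simp only [mul_zero, zero_mul]
        exact zero_le
    · unfold Phi1
      rw [Set.indicator_of_notMem hx]
      simp only [zero_mul]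
      exact zero_le
  -- Step 2 : for x in the ball
  have step2 : ∀ x ∈ B, (∫⁻ ρ : ℝ, ∫⁻ y : Spc N, g x ρ y)
      ≤ ENNReal.ofReal 4 *
        ∫⁻ y in B, ENNReal.ofReal (|v x - v y|^2 / ‖x - y‖ ^ ((N:ℝ) + 2*s)) := by
    intro x hx
    have hDset : MeasurableSet {q : ℝ × Spc N | q.2 ∈ Dball x₀ r ω x q.1} := by
      have hco : Continuous fun q : ℝ × Spc N => ctr x₀ r ω x q.1 :=
        continuous_ctr.comp (continuous_const.prodMk continuous_fst)
      have : IsOpen {q : ℝ × Spc N | dist q.2 (ctr x₀ r ω x q.1) < |q.1|/16} := by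
        apply isOpen_lt
        · exact continuous_dist.comp (continuous_snd.prodMk hco)
        · fun_prop
      exact this.measurableSet
    have hmeasg : Measurable (Function.uncurry (g x)) := by
      have m1 : Measurable fun q : ℝ × Spc N => (Set.Icc (-(2*r)) (2*r)).indicator
          (1 : ℝ → ℝ≥0∞) q.1 :=
        (measurable_const.indicator measurableSet_Icc).comp measurable_fst
      have m2 : Measurable fun q : ℝ × Spc N => (Dball x₀ r ω x q.1).indicator
          (1 : Spc N → ℝ≥0∞) q.2 := by
        have heq : (fun q : ℝ × Spc N => (Dball x₀ r ω x q.1).indicator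
            (1 : Spc N → ℝ≥0∞) q.2)
            = fun q : ℝ × Spc N => {q' : ℝ × Spc N | q'.2 ∈ Dball x₀ r ω x q'.1}.indicator
              (fun _ => (1:ℝ≥0∞)) q := by
          funext q
          by_cases hq : q.2 ∈ Dball x₀ r ω x q.1
          · rw [Set.indicator_of_mem hq, Set.indicator_of_mem (by exact hq)]; rfl
          · rw [Set.indicator_of_notMem hq, Set.indicator_of_notMem (by exact hq)]
        rw [heq]
        exact measurable_const.indicator hDset
      have m3 : Measurable fun q : ℝ × Spc N => wt N s q.1 :=
        (measurable_wt hs0.le).comp measurable_fst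
      have m4 : Measurable fun q : ℝ × Spc N => B.indicator (fun y' => Kf v x y') q.2 :=
        ((hKmeas x).indicator measurableSet_ball).comp measurable_snd
      exact ((m1.mul m2).mul m3).mul m4
    rw [lintegral_lintegral_swap hmeasg.aemeasurable]
    have hinner : ∀ y : Spc N, (∫⁻ ρ : ℝ, g x ρ y)
        ≤ B.indicator (fun y' => Kf v x y') y *
          ENNReal.ofReal (4 / ‖x - y‖ ^ ((N:ℝ) + 2*s)) := by
      intro y
      have hrw : (∫⁻ ρ : ℝ, g x ρ y) = B.indicator (fun y' => Kf v x y') y *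
          ∫⁻ ρ : ℝ, (Set.Icc (-(2*r)) (2*r)).indicator 1 ρ *
            (Dball x₀ r ω x ρ).indicator 1 y * wt N s ρ := by
        rw [← lintegral_const_mul' _ _ (hindK_ne_top x y)]
        apply lintegral_congr
        intro ρ
        simp only [hg]; ring
      rw [hrw]
      exact mul_le_mul_right (rho_integral_le hs0 hr hω hx) _
    calc (∫⁻ y : Spc N, ∫⁻ ρ : ℝ, g x ρ y)
        ≤ ∫⁻ y : Spc N, B.indicator (fun y' => Kf v x y') y *
            ENNReal.ofReal (4 / ‖x - y‖ ^ ((N:ℝ) + 2*s)) := lintegral_mono hinner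
      _ = ∫⁻ y : Spc N, B.indicator (fun y' => Kf v x y' *
            ENNReal.ofReal (4 / ‖x - y'‖ ^ ((N:ℝ) + 2*s))) y := by
          apply lintegral_congr
          intro y
          by_cases hyB : y ∈ B
          · rw [Set.indicator_of_mem hyB, Set.indicator_of_mem hyB]
          · rw [Set.indicator_of_notMem hyB, Set.indicator_of_notMem hyB, zero_mul]
      _ = ∫⁻ y in B, Kf v x y * ENNReal.ofReal (4 / ‖x - y‖ ^ ((N:ℝ) + 2*s)) :=
          lintegral_indicator measurableSet_ball _
      _ = ∫⁻ y in B, ENNReal.ofReal 4 *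
            ENNReal.ofReal (|v x - v y|^2 / ‖x - y‖ ^ ((N:ℝ) + 2*s)) := by
          apply lintegral_congr
          intro y
          unfold Kf
          by_cases hxy : ‖x - y‖ = 0
          · have hyx : x = y := sub_eq_zero.mp (norm_eq_zero.mp hxy)
            rw [hyx]
            simp [sub_self]
          · have hpos : 0 < ‖x - y‖ ^ ((N:ℝ) + 2*s) :=
              Real.rpow_pos_of_pos (lt_of_le_of_ne (norm_nonneg _) (Ne.symm hxy)) _
            rw [← ENNReal.ofReal_mul (by positivity),
              ← ENNReal.ofReal_mul (by norm_num : (0:ℝ) ≤ 4)]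
            congr 1
            field_simp
      _ = ENNReal.ofReal 4 * ∫⁻ y in B,
            ENNReal.ofReal (|v x - v y|^2 / ‖x - y‖ ^ ((N:ℝ) + 2*s)) :=
          lintegral_const_mul' _ _ ENNReal.ofReal_ne_top
  -- Step 3 : assemble
  calc (∫⁻ x : Spc N, ∫⁻ ρ : ℝ, Phi1 x₀ r ω s v x ρ)
      ≤ ∫⁻ x : Spc N, B.indicator 1 x * ∫⁻ ρ : ℝ, ∫⁻ y : Spc N, g x ρ y := by
        apply lintegral_mono
        intro x
        have hne : B.indicator (1 : Spc N → ℝ≥0∞) x ≠ ⊤ := by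
          by_cases hx : x ∈ B
          · rw [Set.indicator_of_mem hx]; exact ENNReal.one_ne_top
          · rw [Set.indicator_of_notMem hx]; exact ENNReal.zero_ne_top
        calc (∫⁻ ρ : ℝ, Phi1 x₀ r ω s v x ρ)
            ≤ ∫⁻ ρ : ℝ, B.indicator 1 x * ∫⁻ y : Spc N, g x ρ y :=
              lintegral_mono (step1 x)
          _ = B.indicator 1 x * ∫⁻ ρ : ℝ, ∫⁻ y : Spc N, g x ρ y :=
              lintegral_const_mul' _ _ hne
    _ ≤ ∫⁻ x : Spc N, B.indicator (fun x' => ENNReal.ofReal 4 * ∫⁻ y in B,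
          ENNReal.ofReal (|v x' - v y|^2 / ‖x' - y‖ ^ ((N:ℝ) + 2*s))) x := by
        apply lintegral_mono
        intro x
        by_cases hx : x ∈ B
        · simp only [Set.indicator_of_mem hx, Pi.one_apply, one_mul]
          exact step2 x hx
        · simp only [Set.indicator_of_notMem hx, zero_mul]
          exact le_rfl
    _ = ENNReal.ofReal 4 * ∫⁻ x in B, ∫⁻ y in B,
          ENNReal.ofReal (|v x - v y|^2 / ‖x - y‖ ^ ((N:ℝ) + 2*s)) := by
        rw [lintegral_indicator measurableSet_ball]
        exact lintegral_const_mul' _ _ ENNReal.ofReal_ne_top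

end DFD

set_option maxHeartbeats 2000000 in
/-- Directional fractional derivatives are controlled by the Gagliardo seminorm on the ball,
with a constant depending only on the dimension. -/
theorem directional_fractional_derivative (N : ℕ) (hN : 1 ≤ N) :
    ∃ A : ℝ, 0 < A ∧
      ∀ s : ℝ, 0 < s → s < 1 → ∀ r : ℝ, 0 < r → ∀ x₀ : Spc N,
        ∀ u : Spc N → ℝ, ContDiffOn ℝ 1 u (closure (ball x₀ r)) →
          ∀ ω : Spc N, ‖ω‖ = 1 →
            (∫⁻ x in ball x₀ r,
                ∫⁻ ρ in Set.Ioo (rdir N x₀ r ω x) (Rdir N x₀ r ω x),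
                  ENNReal.ofReal (|u x - u (x + ρ • ω)| ^ 2 / |ρ| ^ (1 + 2 * s))) ≤
              ENNReal.ofReal A * gagliardoSqOn N s (ball x₀ r) u := by
  classical
  have hV0 : (volume (ball (0:Spc N) 1)) ≠ 0 := (measure_ball_pos volume _ one_pos).ne'
  have hVt : (volume (ball (0:Spc N) 1)) ≠ ⊤ := measure_ball_lt_top.ne
  set vB : ℝ := (volume (ball (0:Spc N) 1)).toReal with hvB
  have hvBpos : 0 < vB := ENNReal.toReal_pos hV0 hVt
  refine ⟨16 * 16^N / vB, by positivity, ?_⟩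
  intro s hs0 hs1 r hr x₀ u hu ω hω
  set v : Spc N → ℝ := (ball x₀ r).piecewise u (fun _ => 0) with hv'
  have hcont : ContinuousOn u (ball x₀ r) := hu.continuousOn.mono subset_closure
  have hv : Measurable v :=
    ContinuousOn.measurable_piecewise hcont continuous_const.continuousOn measurableSet_ball
  have hveq : ∀ z ∈ ball x₀ r, v z = u z := fun z hz => Set.piecewise_eq_of_mem _ _ _ hz
  have hIoo : ∀ x ∈ ball x₀ r, Set.Ioo (rdir N x₀ r ω x) (Rdir N x₀ r ω x) ⊆
      {ρ : ℝ | x + ρ • ω ∈ ball x₀ r} := fun x hx => DFD.Ioo_subset hx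
  have hLHSeq : (∫⁻ x in ball x₀ r,
        ∫⁻ ρ in Set.Ioo (rdir N x₀ r ω x) (Rdir N x₀ r ω x),
          ENNReal.ofReal (|u x - u (x + ρ • ω)| ^ 2 / |ρ| ^ (1 + 2 * s)))
      = ∫⁻ x in ball x₀ r,
        ∫⁻ ρ in Set.Ioo (rdir N x₀ r ω x) (Rdir N x₀ r ω x),
          ENNReal.ofReal (|v x - v (x + ρ • ω)| ^ 2 / |ρ| ^ (1 + 2 * s)) := by
    apply setLIntegral_congr_fun measurableSet_ball
    intro x hx
    apply setLIntegral_congr_fun measurableSet_Ioo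
    intro ρ hρ
    dsimp only
    rw [hveq x hx, hveq _ (hIoo x hx hρ)]
  have hRHSeq : gagliardoSqOn N s (ball x₀ r) u
      = ∫⁻ x in ball x₀ r, ∫⁻ y in ball x₀ r,
          ENNReal.ofReal (|v x - v y| ^ 2 / ‖x - y‖ ^ ((N : ℝ) + 2 * s)) := by
    unfold gagliardoSqOn
    apply setLIntegral_congr_fun measurableSet_ball
    intro x hx
    apply setLIntegral_congr_fun measurableSet_ball
    intro y hy
    dsimp only
    rw [hveq x hx, hveq y hy]
  rw [hLHSeq, hRHSeq]
  set G : ℝ≥0∞ := ∫⁻ x in ball x₀ r, ∫⁻ y in ball x₀ r,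
    ENNReal.ofReal (|v x - v y| ^ 2 / ‖x - y‖ ^ ((N : ℝ) + 2 * s)) with hG
  set C3 : ℝ≥0∞ := ENNReal.ofReal (2 * 16^N) * (volume (ball (0:Spc N) 1))⁻¹ with hC3
  have hC3top : C3 ≠ ⊤ :=
    ENNReal.mul_ne_top ENNReal.ofReal_ne_top (ENNReal.inv_ne_top.mpr hV0)
  have hm1 : Measurable (Function.uncurry (DFD.Phi1 x₀ r ω s v)) :=
    DFD.measurable_phi1 hs0.le hv
  have hm2 : Measurable (Function.uncurry (DFD.Phi2 x₀ r ω s v)) :=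
    DFD.measurable_phi2 hs0.le hv
  have hstepB : (∫⁻ x in ball x₀ r,
        ∫⁻ ρ in Set.Ioo (rdir N x₀ r ω x) (Rdir N x₀ r ω x),
          ENNReal.ofReal (|v x - v (x + ρ • ω)| ^ 2 / |ρ| ^ (1 + 2 * s)))
      ≤ ∫⁻ x : Spc N, ∫⁻ ρ : ℝ,
          C3 * (DFD.Phi1 x₀ r ω s v x ρ + DFD.Phi2 x₀ r ω s v x ρ) := by
    calc (∫⁻ x in ball x₀ r,
          ∫⁻ ρ in Set.Ioo (rdir N x₀ r ω x) (Rdir N x₀ r ω x),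
            ENNReal.ofReal (|v x - v (x + ρ • ω)| ^ 2 / |ρ| ^ (1 + 2 * s)))
        ≤ ∫⁻ x in ball x₀ r,
            ∫⁻ ρ in Set.Ioo (rdir N x₀ r ω x) (Rdir N x₀ r ω x),
              C3 * (DFD.Phi1 x₀ r ω s v x ρ + DFD.Phi2 x₀ r ω s v x ρ) := by
          apply lintegral_mono_ae
          refine (ae_restrict_mem measurableSet_ball).mono fun x hx => ?_
          apply lintegral_mono_ae
          refine (ae_restrict_mem measurableSet_Ioo).mono fun ρ hρ => ?_
          exact DFD.stepA hs0 hr hω hN hv hx (hIoo x hx hρ)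
      _ ≤ ∫⁻ x in ball x₀ r, ∫⁻ ρ : ℝ,
            C3 * (DFD.Phi1 x₀ r ω s v x ρ + DFD.Phi2 x₀ r ω s v x ρ) :=
          lintegral_mono fun x => setLIntegral_le_lintegral _ _
      _ ≤ _ := setLIntegral_le_lintegral _ _
  have hmx1 : ∀ x : Spc N, Measurable fun ρ : ℝ => DFD.Phi1 x₀ r ω s v x ρ := by
    intro x
    have h := hm1.comp (measurable_prodMk_left (x := x))
    exact h
  have hmint1 : Measurable fun x : Spc N => ∫⁻ ρ : ℝ, DFD.Phi1 x₀ r ω s v x ρ := by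
    have h := Measurable.lintegral_prod_right' (ν := volume) hm1
    exact h
  have hsplit : (∫⁻ x : Spc N, ∫⁻ ρ : ℝ,
        C3 * (DFD.Phi1 x₀ r ω s v x ρ + DFD.Phi2 x₀ r ω s v x ρ))
      = C3 * ((∫⁻ x : Spc N, ∫⁻ ρ : ℝ, DFD.Phi1 x₀ r ω s v x ρ)
          + ∫⁻ x : Spc N, ∫⁻ ρ : ℝ, DFD.Phi2 x₀ r ω s v x ρ) := by
    calc (∫⁻ x : Spc N, ∫⁻ ρ : ℝ,
          C3 * (DFD.Phi1 x₀ r ω s v x ρ + DFD.Phi2 x₀ r ω s v x ρ))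
        = ∫⁻ x : Spc N, C3 * ∫⁻ ρ : ℝ,
            (DFD.Phi1 x₀ r ω s v x ρ + DFD.Phi2 x₀ r ω s v x ρ) :=
          lintegral_congr fun x => lintegral_const_mul' _ _ hC3top
      _ = C3 * ∫⁻ x : Spc N, ∫⁻ ρ : ℝ,
            (DFD.Phi1 x₀ r ω s v x ρ + DFD.Phi2 x₀ r ω s v x ρ) :=
          lintegral_const_mul' _ _ hC3top
      _ = C3 * ((∫⁻ x : Spc N, ∫⁻ ρ : ℝ, DFD.Phi1 x₀ r ω s v x ρ)
          + ∫⁻ x : Spc N, ∫⁻ ρ : ℝ, DFD.Phi2 x₀ r ω s v x ρ) := by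
          congr 1
          calc (∫⁻ x : Spc N, ∫⁻ ρ : ℝ,
                (DFD.Phi1 x₀ r ω s v x ρ + DFD.Phi2 x₀ r ω s v x ρ))
              = ∫⁻ x : Spc N, ((∫⁻ ρ : ℝ, DFD.Phi1 x₀ r ω s v x ρ)
                  + ∫⁻ ρ : ℝ, DFD.Phi2 x₀ r ω s v x ρ) :=
                lintegral_congr fun x => lintegral_add_left (hmx1 x) _
            _ = _ := lintegral_add_left hmint1 _
  have hVinv : (volume (ball (0:Spc N) 1))⁻¹ = ENNReal.ofReal vB⁻¹ := by
    rw [← ENNReal.ofReal_toReal hVt, ← hvB, ENNReal.ofReal_inv_of_pos hvBpos,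
      ENNReal.ofReal_toReal hVt]
  have hconst : C3 * 2 * ENNReal.ofReal 4 = ENNReal.ofReal (16 * 16^N / vB) := by
    rw [hC3, hVinv, show (2:ℝ≥0∞) = ENNReal.ofReal 2 by simp,
      ← ENNReal.ofReal_mul (by positivity), ← ENNReal.ofReal_mul (by positivity),
      ← ENNReal.ofReal_mul (by positivity)]
    congr 1
    field_simp
    ring
  calc (∫⁻ x in ball x₀ r,
        ∫⁻ ρ in Set.Ioo (rdir N x₀ r ω x) (Rdir N x₀ r ω x),
          ENNReal.ofReal (|v x - v (x + ρ • ω)| ^ 2 / |ρ| ^ (1 + 2 * s)))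
      ≤ ∫⁻ x : Spc N, ∫⁻ ρ : ℝ,
          C3 * (DFD.Phi1 x₀ r ω s v x ρ + DFD.Phi2 x₀ r ω s v x ρ) := hstepB
    _ = C3 * ((∫⁻ x : Spc N, ∫⁻ ρ : ℝ, DFD.Phi1 x₀ r ω s v x ρ)
        + ∫⁻ x : Spc N, ∫⁻ ρ : ℝ, DFD.Phi2 x₀ r ω s v x ρ) := hsplit
    _ = C3 * (2 * ∫⁻ x : Spc N, ∫⁻ ρ : ℝ, DFD.Phi1 x₀ r ω s v x ρ) := by
        rw [DFD.phi2_integral_eq hs0.le hv, two_mul]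
    _ ≤ C3 * (2 * (ENNReal.ofReal 4 * G)) := by
        apply mul_le_mul_right
        apply mul_le_mul_right
        exact DFD.phi1_integral_le hs0 hr hω hv
    _ = (C3 * 2 * ENNReal.ofReal 4) * G := by ring
    _ = ENNReal.ofReal (16 * 16^N / vB) * G := by rw [hconst]
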